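/- Let R_1,...,R_M : [-1,1] → ℝ be continuous functions, define w_k = ∫_{-1}^{1} R_k(τ) dτ, assume all w_k ≠ 0, and define S_{kj} = (1/w_k) ∫_{-1}^{1} (∫_{-1}^{τ} R_j(s) ds) R_k(τ) dτ. Then for all k, j: w_k S_{kj} + w_j S_{jk} - w_k w_j = 0. -/

import Mathlib

open intervalIntegral MeasureTheory Set

theorem stmt_2 (M : ℕ) (hM : 1 ≤ M) (R : Fin M → ℝ → ℝ)
    (hR : ∀ k, ContinuousOn (R k) (Set.Icc (-1 : ℝ) 1))
    (w : Fin M → ℝ) (hw : ∀ k, w k = ∫ τ in (-1 : ℝ)..1, R k τ)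
    (hw0 : ∀ k, w k ≠ 0)
    (S : Fin M → Fin M → ℝ)
    (hS : ∀ k j, S k j =
      (∫ τ in (-1 : ℝ)..1, (∫ s in (-1 : ℝ)..τ, R j s) * R k τ) / w k) :
    ∀ k j, w k * S k j + w j * S j k - w k * w j = 0 := by
  have h11 : (-1 : ℝ) ≤ 1 := by norm_num
  have huIcc : uIcc (-1 : ℝ) 1 = Icc (-1 : ℝ) 1 := uIcc_of_le h11
  set F : Fin M → ℝ → ℝ := fun j τ => ∫ s in (-1 : ℝ)..τ, R j s with hF
  have hInt : ∀ j, IntervalIntegrable (R j) volume (-1 : ℝ) 1 := fun j =>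
    (huIcc ▸ hR j : ContinuousOn (R j) (uIcc (-1 : ℝ) 1)).intervalIntegrable
  have hFc : ∀ j, ContinuousOn (F j) (Icc (-1 : ℝ) 1) := by
    intro j
    have := intervalIntegral.continuousOn_primitive_interval
      (f := R j) (μ := volume) (a := (-1 : ℝ)) (b := 1)
      ((intervalIntegrable_iff_integrableOn_Icc_of_le h11).1 (hInt j) |>.congr_set_ae
        (by rw [huIcc]; exact Filter.EventuallyEq.rfl))
    rwa [huIcc] at this
  have hFderiv : ∀ j, ∀ x ∈ Ioo (-1 : ℝ) 1, HasDerivAt (F j) (R j x) x := by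
    intro j x hx
    have hmem : Icc (-1 : ℝ) 1 ∈ nhds x := Icc_mem_nhds hx.1 hx.2
    have hca : ContinuousAt (R j) x := (hR j).continuousAt hmem
    have hmeas : StronglyMeasurableAtFilter (R j) (nhds x) volume :=
      AEStronglyMeasurable.stronglyMeasurableAtFilter_of_mem
        ((hR j).aestronglyMeasurable measurableSet_Icc) hmem
    have hint' : IntervalIntegrable (R j) volume (-1 : ℝ) x :=
      (hInt j).mono_set (by
        rw [huIcc, uIcc_of_le hx.1.le]
        exact Icc_subset_Icc le_rfl hx.2.le)
    exact intervalIntegral.integral_hasDerivAt_right hint' hmeas hca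
  intro k j
  -- reduce S terms
  have hwS : ∀ k j, w k * S k j = ∫ τ in (-1 : ℝ)..1, F j τ * R k τ := by
    intro k j
    rw [hS k j, mul_div_cancel₀ _ (hw0 k)]
  -- integrability of F j * R k
  have hprodInt : ∀ k j, IntervalIntegrable (fun τ => F j τ * R k τ) volume (-1 : ℝ) 1 := by
    intro k j
    exact (((hFc j).mul (hR k)).congr_mono (fun x hx => rfl) (by rw [huIcc])).intervalIntegrable
  -- FTC for g = F j * F k
  have key : (∫ τ in (-1 : ℝ)..1, (F j τ * R k τ + F k τ * R j τ)) = w j * w k := by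
    have hFa : ∀ j, F j (-1 : ℝ) = 0 := by intro j; simp [hF]
    have hFb : ∀ j, F j (1 : ℝ) = w j := by intro j; simp [hF, hw j]
    have := intervalIntegral.integral_eq_sub_of_hasDerivAt_of_le h11
      (f := fun τ => F j τ * F k τ)
      (f' := fun τ => F j τ * R k τ + F k τ * R j τ)
      ((hFc j).mul (hFc k))
      (fun x hx => by
        have := ((hFderiv j x hx).mul (hFderiv k x hx))
        exact this.congr_deriv (by beta_reduce; ring))
      ((hprodInt k j).add (hprodInt j k))
    rw [this]
    show F j 1 * F k 1 - F j (-1) * F k (-1) = w j * w k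
    rw [hFa, hFb, hFa, hFb]
    ring
  rw [hwS k j, hwS j k, ← intervalIntegral.integral_add (hprodInt k j) (hprodInt j k), key]
  ring
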